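/- Every approval-based sub-committee voting instance admits a committee that simultaneously satisfies weak span-wise justified representation (weak-SW-JR) and intra-wise justified representation (IW-JR). That is, for every finite set of voters N = {1,…,n}, every partition of the candidate set C into subsets C_1,…,C_ℓ, every positive quotas k_j ≤ |C_j| with k = Σ_j k_j, and every profile of approval ballots A_i ⊆ C, there exists W ⊆ C with |W ∩ C_j| = k_j for all j such that W satisfies both weak-SW-JR and IW-JR. -/

import Mathlib

open Finset

/-- Span-wise justified representation: every group of voters `X` with
`|X| ≥ n/k` and a commonly approved candidate has some approved candidate in `W`. -/
def SWJR {α : Type*} [DecidableEq α] (n k : ℕ) (A : Fin n → Finset α)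
    (W : Finset α) : Prop :=
  ∀ X : Finset (Fin n), (n : ℝ) / (k : ℝ) ≤ (X.card : ℝ) →
    (∃ c, ∀ i ∈ X, c ∈ A i) → (W ∩ X.biUnion A).Nonempty

/-- Weak span-wise justified representation: every group of voters `X` with
`|X| ≥ n/k` and a commonly approved candidate in *every* candidate subset `Cs j`
has some approved candidate in `W`. -/
def WeakSWJR {α : Type*} [DecidableEq α] (n ℓ k : ℕ) (Cs : Fin ℓ → Finset α)
    (A : Fin n → Finset α) (W : Finset α) : Prop :=
  ∀ X : Finset (Fin n), (n : ℝ) / (k : ℝ) ≤ (X.card : ℝ) →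
    (∀ j, ∃ c ∈ Cs j, ∀ i ∈ X, c ∈ A i) → (W ∩ X.biUnion A).Nonempty

/-- Intra-wise justified representation: for every subset `Cs j` (with quota `q j`),
every group of voters `X` with `|X| ≥ n/(q j)` and a commonly approved candidate in `Cs j`
has some approved candidate in `W ∩ Cs j`. -/
def IWJR {α : Type*} [DecidableEq α] (n ℓ : ℕ) (Cs : Fin ℓ → Finset α)
    (q : Fin ℓ → ℕ) (A : Fin n → Finset α) (W : Finset α) : Prop :=
  ∀ j, ∀ X : Finset (Fin n), (n : ℝ) / (q j : ℝ) ≤ (X.card : ℝ) →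
    (∃ c ∈ Cs j, ∀ i ∈ X, c ∈ A i) → ((W ∩ Cs j) ∩ X.biUnion A).Nonempty

/-- Justified representation in a single-committee approval voting instance
with committee size `κ` and ballots `B`. -/
def JR {α : Type*} [DecidableEq α] (n κ : ℕ) (B : Fin n → Finset α)
    (S : Finset α) : Prop :=
  ∀ X : Finset (Fin n), (n : ℝ) / (κ : ℝ) ≤ (X.card : ℝ) →
    (∃ c, ∀ i ∈ X, c ∈ B i) → (S ∩ X.biUnion B).Nonempty

/-- `harmonicR j = 1 + 1/2 + ⋯ + 1/j`, with `harmonicR 0 = 0`. -/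
noncomputable def harmonicR (j : ℕ) : ℝ := ∑ p ∈ Finset.range j, (1 : ℝ) / (p + 1)

/-- Span-wise PAV score of a committee `W`. -/
noncomputable def SWPAV {α : Type*} [DecidableEq α] (n : ℕ) (A : Fin n → Finset α)
    (W : Finset α) : ℝ :=
  ∑ i, harmonicR ((W ∩ A i).card)

/-- Intra-wise PAV score of a committee `W`. -/
noncomputable def IWPAV {α : Type*} [DecidableEq α] (n ℓ : ℕ) (Cs : Fin ℓ → Finset α)
    (A : Fin n → Finset α) (W : Finset α) : ℝ :=
  ∑ j, ∑ i, harmonicR ((W ∩ A i ∩ Cs j).card)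

/-- every approval-based SCV instance admits a committee that
simultaneously satisfies weak-SW-JR and IW-JR. -/

lemma cov_insert {α : Type*} [DecidableEq α] {n : ℕ} (A : Fin n → Finset α)
    (c : α) (G : Finset α) :
    (univ.filter fun i => (G ∩ A i).Nonempty).card
      + (univ.filter fun i => c ∈ A i ∧ G ∩ A i = ∅).card
      ≤ (univ.filter fun i => ((insert c G) ∩ A i).Nonempty).card := by
  classical
  rw [← Finset.card_union_of_disjoint]
  · apply Finset.card_le_card
    intro i hi
    simp only [mem_union, mem_filter, mem_univ, true_and] at hi ⊢
    rcases hi with h | ⟨hc, _⟩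
    · exact h.mono (by gcongr; exact subset_insert _ _)
    · exact ⟨c, by simp [hc]⟩
  · rw [Finset.disjoint_left]
    intro i hi hi'
    simp only [mem_filter, mem_univ, true_and] at hi hi'
    rw [hi'.2] at hi
    exact not_nonempty_empty hi

lemma exists_greedy {α : Type*} [DecidableEq α] (n : ℕ) (A : Fin n → Finset α)
    (P : Finset α) (m : ℕ) (θ : ℝ) (hθ : 0 < θ) :
    ∃ G : Finset α, G ⊆ P ∧ G.card ≤ m ∧
      (G.card : ℝ) * θ ≤ ((univ.filter fun i => (G ∩ A i).Nonempty).card : ℝ) ∧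
      (G.card = m ∨ ∀ c ∈ P,
        (((univ.filter fun i => c ∈ A i ∧ G ∩ A i = ∅).card : ℝ) < θ)) := by
  classical
  set S : Finset (Finset α) := P.powerset.filter
    (fun G => G.card ≤ m ∧
      (G.card : ℝ) * θ ≤ ((univ.filter fun i => (G ∩ A i).Nonempty).card : ℝ)) with hS
  have hne : S.Nonempty := ⟨∅, by simp [hS]⟩
  obtain ⟨G, hG, hmax⟩ := S.exists_max_image Finset.card hne
  simp only [hS, mem_filter, mem_powerset] at hG
  obtain ⟨hGP, hGm, hGcov⟩ := hG
  refine ⟨G, hGP, hGm, hGcov, ?_⟩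
  by_cases hfull : G.card = m
  · exact Or.inl hfull
  · right
    intro c hc
    by_contra hge
    push_neg at hge
    have hpos : (0:ℝ) < ((univ.filter fun i => c ∈ A i ∧ G ∩ A i = ∅).card : ℝ) :=
      lt_of_lt_of_le hθ hge
    have hcard : 0 < (univ.filter fun i => c ∈ A i ∧ G ∩ A i = ∅).card := by
      exact_mod_cast hpos
    obtain ⟨i, hi⟩ := Finset.card_pos.mp hcard
    simp only [mem_filter, mem_univ, true_and] at hi
    have hcG : c ∉ G := by
      intro hcG
      have : c ∈ G ∩ A i := by simp [hcG, hi.1]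
      rw [hi.2] at this; simp at this
    have hcard' : (insert c G).card = G.card + 1 := Finset.card_insert_of_notMem hcG
    have hmem : insert c G ∈ S := by
      simp only [hS, mem_filter, mem_powerset]
      refine ⟨insert_subset hc hGP, ?_, ?_⟩
      · omega
      · rw [hcard']
        push_cast
        calc ((G.card : ℝ) + 1) * θ = (G.card : ℝ) * θ + θ := by ring
        _ ≤ ((univ.filter fun i => (G ∩ A i).Nonempty).card : ℝ)
            + ((univ.filter fun i => c ∈ A i ∧ G ∩ A i = ∅).card : ℝ) := by gcongr
        _ ≤ _ := by exact_mod_cast cov_insert A c G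
    have := hmax _ hmem
    omega

lemma card_inter_sum {α : Type*} [DecidableEq α] {ℓ : ℕ} (Cs : Fin ℓ → Finset α)
    (hdisj : ∀ j1 j2 : Fin ℓ, j1 ≠ j2 → Disjoint (Cs j1) (Cs j2))
    {W : Finset α} (hW : W ⊆ Finset.univ.biUnion Cs) :
    W.card = ∑ j, (W ∩ Cs j).card := by
  classical
  have hWeq : W = univ.biUnion (fun j => W ∩ Cs j) := by
    ext x
    simp only [mem_biUnion, mem_univ, true_and, mem_inter]
    constructor
    · intro hx
      obtain ⟨j, _, hj⟩ := mem_biUnion.mp (hW hx)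
      exact ⟨j, hx, hj⟩
    · rintro ⟨j, hx, _⟩; exact hx
  conv_lhs => rw [hWeq]
  exact Finset.card_biUnion (fun j _ j' _ hne =>
    (hdisj j j' hne).mono inter_subset_right inter_subset_right)

theorem stmt_7 {α : Type*} [DecidableEq α] (n ℓ : ℕ) (hn : 0 < n) (hℓ : 0 < ℓ)
    (Cs : Fin ℓ → Finset α)
    (hdisj : ∀ j1 j2 : Fin ℓ, j1 ≠ j2 → Disjoint (Cs j1) (Cs j2))
    (q : Fin ℓ → ℕ) (hq : ∀ j, 0 < q j) (hqle : ∀ j, q j ≤ (Cs j).card)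
    (A : Fin n → Finset α) (hA : ∀ i, A i ⊆ Finset.univ.biUnion Cs) :
    ∃ W : Finset α, W ⊆ Finset.univ.biUnion Cs ∧ (∀ j, (W ∩ Cs j).card = q j) ∧
      WeakSWJR n ℓ (∑ j, q j) Cs A W ∧ IWJR n ℓ Cs q A W := by
  classical
  set k := ∑ j, q j with hk_def
  have hkpos : 0 < k := Finset.sum_pos (fun j _ => hq j) ⟨⟨0, hℓ⟩, mem_univ _⟩
  have hkR : (0:ℝ) < (k:ℝ) := by exact_mod_cast hkpos
  have hnR : (0:ℝ) < (n:ℝ) := by exact_mod_cast hn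
  have hnk : (0:ℝ) < (n:ℝ)/(k:ℝ) := div_pos hnR hkR
  set covN : Finset α → ℕ :=
    fun W => (univ.filter fun i => (W ∩ A i).Nonempty).card with hcovN
  -- Phase A: threshold greedy in each block
  have hblock : ∀ j : Fin ℓ, ∃ G : Finset α, G ⊆ Cs j ∧ G.card ≤ q j ∧
      (G.card : ℝ) * ((n:ℝ)/(q j : ℝ)) ≤ (covN G : ℝ) ∧
      (G.card = q j ∨ ∀ c ∈ Cs j,
        (((univ.filter fun i => c ∈ A i ∧ G ∩ A i = ∅).card : ℝ) < (n:ℝ)/(q j : ℝ))) := by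
    intro j
    have hqR : (0:ℝ) < ((q j : ℕ):ℝ) := by exact_mod_cast hq j
    exact exists_greedy n A (Cs j) (q j) ((n:ℝ)/(q j)) (div_pos hnR hqR)
  choose G hGsub hGcard hGcov hGstop using hblock
  set W0 : Finset α := univ.biUnion G with hW0
  have hW0sub : W0 ⊆ univ.biUnion Cs := by
    intro x hx
    obtain ⟨j, _, hj⟩ := mem_biUnion.mp hx
    exact mem_biUnion.mpr ⟨j, mem_univ _, hGsub j hj⟩
  have hW0blk : ∀ j, W0 ∩ Cs j = G j := by
    intro j
    ext x
    simp only [hW0, mem_inter, mem_biUnion, mem_univ, true_and]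
    constructor
    · rintro ⟨⟨j', hj'⟩, hxj⟩
      rcases eq_or_ne j' j with rfl | hne
      · exact hj'
      · exact absurd hxj (Finset.disjoint_left.mp (hdisj j' j hne) (hGsub j' hj')).elim
    · intro hx
      exact ⟨⟨j, hx⟩, hGsub j hx⟩
  -- Phase B: maximal extension with good marginal coverage
  set T : Finset (Finset α) := ((univ.biUnion Cs).powerset).filter
    (fun W => W0 ⊆ W ∧ (∀ j, (W ∩ Cs j).card ≤ q j) ∧
      (covN W0 : ℝ) + ((W.card : ℝ) - (W0.card : ℝ)) * ((n:ℝ)/(k:ℝ)) ≤ (covN W : ℝ)) with hT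
  have hW0T : W0 ∈ T := by
    simp only [hT, mem_filter, mem_powerset]
    refine ⟨hW0sub, subset_rfl, fun j => by rw [hW0blk j]; exact hGcard j, by simp⟩
  obtain ⟨W1, hW1T, hmax⟩ := T.exists_max_image Finset.card ⟨W0, hW0T⟩
  simp only [hT, mem_filter, mem_powerset] at hW1T
  obtain ⟨hW1sub, hW01, hW1blk, hW1cov⟩ := hW1T
  -- coverage of W0 dominates coverage of each G j
  have hcovmono : ∀ {U V : Finset α}, U ⊆ V → covN U ≤ covN V := by
    intro U V hUV
    apply Finset.card_le_card
    intro i hi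
    simp only [mem_filter, mem_univ, true_and] at hi ⊢
    exact hi.mono (by gcongr)
  -- Key claim: W1 hits every weak-SW-JR cohesive group
  have hSW1 : ∀ X : Finset (Fin n), (n : ℝ) / (k : ℝ) ≤ (X.card : ℝ) →
      (∀ j, ∃ c ∈ Cs j, ∀ i ∈ X, c ∈ A i) → (W1 ∩ X.biUnion A).Nonempty := by
    intro X hX hcoh
    by_contra hunhit
    rw [Finset.not_nonempty_iff_eq_empty] at hunhit
    have hXne : X.Nonempty := by
      rw [← Finset.card_pos]
      have : (0:ℝ) < (X.card : ℝ) := lt_of_lt_of_le hnk hX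
      exact_mod_cast this
    have hXuncov : ∀ i ∈ X, W1 ∩ A i = ∅ := by
      intro i hi
      rw [Finset.eq_empty_iff_forall_notMem]
      intro x hx
      have : x ∈ W1 ∩ X.biUnion A := by
        rw [mem_inter] at hx ⊢
        exact ⟨hx.1, mem_biUnion.mpr ⟨i, hi, hx.2⟩⟩
      rw [hunhit] at this; simp at this
    -- covered voters and X are disjoint
    have hcovX : (covN W1 : ℝ) + (X.card : ℝ) ≤ (n : ℝ) := by
      have hdisjX : Disjoint (univ.filter fun i => (W1 ∩ A i).Nonempty) X := by
        rw [Finset.disjoint_left]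
        intro i hi hiX
        simp only [mem_filter, mem_univ, true_and] at hi
        rw [hXuncov i hiX] at hi
        exact not_nonempty_empty hi
      have := Finset.card_le_card (Finset.subset_univ
        ((univ.filter fun i => (W1 ∩ A i).Nonempty) ∪ X))
      rw [Finset.card_union_of_disjoint hdisjX, Finset.card_fin] at this
      exact_mod_cast this
    by_cases hfull : ∀ j, (W1 ∩ Cs j).card = q j
    · -- all quotas full: counting contradiction
      obtain ⟨j0, _, hj0⟩ := (univ : Finset (Fin ℓ)).exists_max_image
        (fun j => ((G j).card : ℝ) / ((q j : ℕ) : ℝ)) ⟨⟨0, hℓ⟩, mem_univ _⟩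
      set a : ℝ := ((G j0).card : ℝ) / ((q j0 : ℕ) : ℝ) with ha
      have hW1card : W1.card = k := by
        rw [card_inter_sum Cs hdisj hW1sub, hk_def]
        exact Finset.sum_congr rfl (fun j _ => hfull j)
      have hW0card : (W0.card : ℝ) ≤ a * (k : ℝ) := by
        have h1 : (W0.card : ℕ) ≤ ∑ j, (G j).card := Finset.card_biUnion_le
        have h2 : ((∑ j, (G j).card : ℕ) : ℝ) ≤ ∑ j, a * ((q j : ℕ) : ℝ) := by
          push_cast
          apply Finset.sum_le_sum
          intro j _
          have hqR : (0:ℝ) < ((q j : ℕ) : ℝ) := by exact_mod_cast hq j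
          have := hj0 j (mem_univ j)
          rw [div_le_iff₀ hqR] at this
          exact this
        have h3 : ∑ j, a * ((q j : ℕ) : ℝ) = a * (k : ℝ) := by
          rw [← Finset.mul_sum, hk_def]; push_cast; ring
        calc (W0.card : ℝ) ≤ ((∑ j, (G j).card : ℕ) : ℝ) := by exact_mod_cast h1
          _ ≤ a * (k : ℝ) := h3 ▸ h2
      have hcov0 : a * (n : ℝ) ≤ (covN W0 : ℝ) := by
        have hqR : (0:ℝ) < ((q j0 : ℕ) : ℝ) := by exact_mod_cast hq j0
        have h1 : a * (n : ℝ) = ((G j0).card : ℝ) * ((n:ℝ)/((q j0 : ℕ):ℝ)) := by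
          rw [ha]; field_simp
        have h2 : (covN (G j0) : ℝ) ≤ (covN W0 : ℝ) := by
          exact_mod_cast hcovmono (fun x hx => mem_biUnion.mpr ⟨j0, mem_univ _, hx⟩)
        calc a * (n : ℝ) = ((G j0).card : ℝ) * ((n:ℝ)/((q j0 : ℕ):ℝ)) := h1
          _ ≤ (covN (G j0) : ℝ) := hGcov j0
          _ ≤ (covN W0 : ℝ) := h2
      have hkey : (n : ℝ) ≤ (covN W1 : ℝ) := by
        have hstep : ((1:ℝ) - a) * (n : ℝ) ≤ ((k:ℝ) - (W0.card : ℝ)) * ((n:ℝ)/(k:ℝ)) := by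
          have h1 : ((1:ℝ) - a) * (n:ℝ) = ((k:ℝ) - a * k) * ((n:ℝ)/(k:ℝ)) := by
            field_simp
          rw [h1]
          apply mul_le_mul_of_nonneg_right _ (le_of_lt hnk)
          linarith
        have h2 : (covN W0 : ℝ) + ((k:ℝ) - (W0.card : ℝ)) * ((n:ℝ)/(k:ℝ))
            ≤ (covN W1 : ℝ) := by
          have := hW1cov
          rw [hW1card] at this
          exact this
        linarith
      linarith
    · -- some block unfull: extend W1, contradicting maximality
      push_neg at hfull
      obtain ⟨j0, hj0⟩ := hfull
      have hj0lt : (W1 ∩ Cs j0).card < q j0 := lt_of_le_of_ne (hW1blk j0) hj0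
      obtain ⟨c, hcCs, hcX⟩ := hcoh j0
      obtain ⟨i0, hi0⟩ := hXne
      have hcW1 : c ∉ W1 := by
        intro hc
        have : c ∈ W1 ∩ X.biUnion A :=
          mem_inter.mpr ⟨hc, mem_biUnion.mpr ⟨i0, hi0, hcX i0 hi0⟩⟩
        rw [hunhit] at this; simp at this
      have hcard2 : (insert c W1).card = W1.card + 1 := Finset.card_insert_of_notMem hcW1
      have hmem : insert c W1 ∈ T := by
        simp only [hT, mem_filter, mem_powerset]
        refine ⟨insert_subset (mem_biUnion.mpr ⟨j0, mem_univ _, hcCs⟩) hW1sub,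
          hW01.trans (subset_insert _ _), ?_, ?_⟩
        · intro j
          rcases eq_or_ne j j0 with rfl | hne
          · rw [Finset.insert_inter_of_mem hcCs, Finset.card_insert_of_notMem
              (fun h => hcW1 (mem_inter.mp h).1)]
            omega
          · rw [Finset.insert_inter_of_notMem
              (fun h => Finset.disjoint_left.mp (hdisj j0 j hne.symm) hcCs h)]
            exact hW1blk j
        · -- coverage increases by at least |X|
          have hXcov : (covN W1 : ℝ) + (X.card : ℝ) ≤ (covN (insert c W1) : ℝ) := by
            have hsub : (univ.filter fun i => (W1 ∩ A i).Nonempty) ∪ X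
                ⊆ univ.filter fun i => ((insert c W1) ∩ A i).Nonempty := by
              intro i hi
              simp only [mem_union, mem_filter, mem_univ, true_and] at hi ⊢
              rcases hi with h | hiX
              · exact h.mono (by gcongr; exact subset_insert _ _)
              · exact ⟨c, mem_inter.mpr ⟨mem_insert_self _ _, hcX i hiX⟩⟩
            have hdisjX : Disjoint (univ.filter fun i => (W1 ∩ A i).Nonempty) X := by
              rw [Finset.disjoint_left]
              intro i hi hiX
              simp only [mem_filter, mem_univ, true_and] at hi
              rw [hXuncov i hiX] at hi
              exact not_nonempty_empty hi
            have := Finset.card_le_card hsub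
            rw [Finset.card_union_of_disjoint hdisjX] at this
            exact_mod_cast this
          have h1 : (covN W0 : ℝ) + ((W1.card : ℝ) - (W0.card : ℝ)) * ((n:ℝ)/(k:ℝ))
              + (n:ℝ)/(k:ℝ) ≤ (covN W1 : ℝ) + (X.card : ℝ) := by linarith
          rw [hcard2]
          push_cast
          nlinarith
      have := hmax _ hmem
      omega
  -- Phase C: fill remaining quota arbitrarily
  have hfillex : ∀ j, ∃ E : Finset α, E ⊆ Cs j \ W1 ∧ E.card = q j - (W1 ∩ Cs j).card := by
    intro j
    apply Finset.exists_subset_card_eq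
    have h1 : Cs j \ W1 = Cs j \ (W1 ∩ Cs j) := by
      ext x; simp only [mem_sdiff, mem_inter]; tauto
    rw [h1, Finset.card_sdiff_of_subset inter_subset_right]
    have := hqle j
    omega
  choose E hEsub hEcard using hfillex
  set W : Finset α := W1 ∪ univ.biUnion E with hWdef
  have hEC : ∀ j, E j ⊆ Cs j := fun j => (hEsub j).trans sdiff_subset
  have hWsub : W ⊆ univ.biUnion Cs := by
    intro x hx
    rcases mem_union.mp hx with h | h
    · exact hW1sub h
    · obtain ⟨j, _, hj⟩ := mem_biUnion.mp h
      exact mem_biUnion.mpr ⟨j, mem_univ _, hEC j hj⟩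
  have hWblk : ∀ j, W ∩ Cs j = (W1 ∩ Cs j) ∪ E j := by
    intro j
    ext x
    simp only [hWdef, mem_inter, mem_union, mem_biUnion, mem_univ, true_and]
    constructor
    · rintro ⟨h | ⟨j', hj'⟩, hxj⟩
      · exact Or.inl ⟨h, hxj⟩
      · rcases eq_or_ne j' j with rfl | hne
        · exact Or.inr hj'
        · exact absurd hxj (Finset.disjoint_left.mp (hdisj j' j hne) (hEC j' hj')).elim
    · rintro (⟨h1, h2⟩ | h)
      · exact ⟨Or.inl h1, h2⟩
      · exact ⟨Or.inr ⟨j, h⟩, hEC j h⟩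
  have hWq : ∀ j, (W ∩ Cs j).card = q j := by
    intro j
    rw [hWblk j, Finset.card_union_of_disjoint, hEcard j]
    · have := hW1blk j; omega
    · rw [Finset.disjoint_right]
      intro x hx hx'
      exact (mem_sdiff.mp (hEsub j hx)).2 (mem_inter.mp hx').1
  have hW1W : W1 ⊆ W := subset_union_left
  refine ⟨W, hWsub, hWq, ?_, ?_⟩
  · -- Weak SW-JR
    intro X hX hcoh
    obtain ⟨x, hx⟩ := hSW1 X hX hcoh
    exact ⟨x, mem_inter.mpr ⟨hW1W (mem_inter.mp hx).1, (mem_inter.mp hx).2⟩⟩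
  · -- IW-JR
    intro j X hX hc
    by_contra hempty
    rw [Finset.not_nonempty_iff_eq_empty] at hempty
    have hqR : (0:ℝ) < ((q j : ℕ) : ℝ) := by exact_mod_cast hq j
    have hnq : (0:ℝ) < (n:ℝ)/((q j : ℕ):ℝ) := div_pos hnR hqR
    have hXne : X.Nonempty := by
      rw [← Finset.card_pos]
      have : (0:ℝ) < (X.card : ℝ) := lt_of_lt_of_le hnq hX
      exact_mod_cast this
    have hGW : G j ⊆ W ∩ Cs j := by
      intro x hx
      exact mem_inter.mpr ⟨hW1W (hW01 (mem_biUnion.mpr ⟨j, mem_univ _, hx⟩)), hGsub j hx⟩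
    have hGuncov : ∀ i ∈ X, G j ∩ A i = ∅ := by
      intro i hi
      rw [Finset.eq_empty_iff_forall_notMem]
      intro x hx
      have : x ∈ (W ∩ Cs j) ∩ X.biUnion A :=
        mem_inter.mpr ⟨hGW (mem_inter.mp hx).1,
          mem_biUnion.mpr ⟨i, hi, (mem_inter.mp hx).2⟩⟩
      rw [hempty] at this; simp at this
    rcases hGstop j with hfull | hstop
    · -- block fully covered: contradiction with uncovered X
      have h1 : (n : ℝ) ≤ (covN (G j) : ℝ) := by
        have := hGcov j
        rw [hfull] at this
        have heq : ((q j : ℕ) : ℝ) * ((n:ℝ)/((q j : ℕ):ℝ)) = (n:ℝ) := by field_simp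
        linarith [heq ▸ this]
      have h2 : covN (G j) ≤ n := by
        have := Finset.card_le_card (Finset.subset_univ
          (univ.filter fun i => (G j ∩ A i).Nonempty))
        rwa [Finset.card_fin] at this
      have h3 : (univ.filter fun i => (G j ∩ A i).Nonempty) = univ := by
        apply Finset.eq_univ_of_card
        rw [Fintype.card_fin]
        have h4 : n ≤ covN (G j) := by exact_mod_cast h1
        have h5 : covN (G j) = (univ.filter fun i => (G j ∩ A i).Nonempty).card := rfl
        omega
      obtain ⟨i0, hi0⟩ := hXne
      have : i0 ∈ univ.filter fun i => (G j ∩ A i).Nonempty := by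
        rw [h3]; exact mem_univ i0
      simp only [mem_filter, mem_univ, true_and] at this
      rw [hGuncov i0 hi0] at this
      exact not_nonempty_empty this
    · -- stopping condition contradicts the cohesive group X
      obtain ⟨c, hcCs, hcX⟩ := hc
      have hXsub : X ⊆ univ.filter fun i => c ∈ A i ∧ G j ∩ A i = ∅ := by
        intro i hi
        simp only [mem_filter, mem_univ, true_and]
        exact ⟨hcX i hi, hGuncov i hi⟩
      have := Finset.card_le_card hXsub
      have hlt := hstop c hcCs
      have : (X.card : ℝ) ≤ ((univ.filter fun i => c ∈ A i ∧ G j ∩ A i = ∅).card : ℝ) := by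
        exact_mod_cast this
      linarith
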